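/- Assume B1 = 0, D ≠ ∅, and that the values h_k over slots k with Π(k) ≠ 0 are pairwise distinct. Define effective gains g'_{k,n} := h_{d_i}·g_{k,n} for k ∈ D_{i+1}, i ∈ {1,…,|D|}, n ∈ N_k^I. Then the optimal value of Problem (P) equals the optimal value of the water-filling problem: maximize (1/(K·N))·∑_{k=d_1+1}^{K} ∑_{n∈N_k^I} log₂(1 + g'_{k,n}·p'_{k,n}/(Γσ²)) over nonnegative arrays p' = (p'_{k,n}), k ∈ {d_1+1,…,K}, n ∈ N_k^I, subject to ∑_{k=d_1+1}^{K} ∑_{n∈N_k^I} p'_{k,n} = ζ·K·Q. -/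

import Mathlib

noncomputable section

/-- The information sub-channel set `N_k^I = {0,…,N} \ {Π(k)}`. -/
def NI (N : ℕ) (Pi : ℕ → ℕ) (k : ℕ) : Finset ℕ := Finset.Icc 0 N \ {Pi k}

/-- Feasibility for Problem (P) with a single WET sub-channel `Π(k)` per slot. -/
def FeasibleP (K N : ℕ) (h : ℕ → ℕ → ℝ) (Q ζ B1 : ℝ) (Pi : ℕ → ℕ)
    (q : ℕ → ℝ) (p : ℕ → ℕ → ℝ) : Prop :=
  (∀ k ∈ Finset.Icc 1 K, 0 ≤ q k) ∧
  (∀ k ∈ Finset.Icc 1 K, Pi k = 0 → q k = 0) ∧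
  (∀ k ∈ Finset.Icc 1 K, ∀ n ∈ NI N Pi k, 0 ≤ p k n) ∧
  (∑ k ∈ Finset.Icc 1 K, q k ≤ (K : ℝ) * Q) ∧
  (∀ i ∈ Finset.Icc 1 K,
    ∑ k ∈ Finset.Icc 1 i, ∑ n ∈ NI N Pi k, p k n ≤
      ζ * ∑ k ∈ Finset.Icc 1 (i - 1), h k (Pi k) * q k + B1)

/-- Achievable rate for Problem (P). -/
def RateP (K N : ℕ) (g : ℕ → ℕ → ℝ) (Γσ : ℝ) (Pi : ℕ → ℕ) (p : ℕ → ℕ → ℝ) : ℝ :=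
  (1 / ((K : ℝ) * N)) * ∑ k ∈ Finset.Icc 1 K, ∑ n ∈ NI N Pi k,
    Real.logb 2 (1 + g k n * p k n / Γσ)

open Classical in
/-- The set `D` of causally dominating slots. -/
def Dset (K : ℕ) (h : ℕ → ℕ → ℝ) (Pi : ℕ → ℕ) : Finset ℕ :=
  (Finset.Icc 1 (K - 1)).filter
    (fun k => Pi k ≠ 0 ∧ ∀ j, 1 ≤ j → j < k → h j (Pi j) < h k (Pi k))

end



private lemma icc_eq_ioc (x : ℕ) : Finset.Icc 1 x = Finset.Ioc 0 x := by
  ext y; simp [Finset.mem_Icc, Finset.mem_Ioc, Nat.lt_iff_add_one_le]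

private lemma sum_split (a b : ℕ) (hab : a ≤ b) (f : ℕ → ℝ) :
    ∑ k ∈ Finset.Icc 1 b, f k
      = ∑ k ∈ Finset.Icc 1 a, f k + ∑ k ∈ Finset.Ioc a b, f k := by
  rw [icc_eq_ioc, icc_eq_ioc, Finset.sum_Ioc_consecutive f (Nat.zero_le a) hab]

private lemma sum_parts (f : ℕ → ℝ) :
    ∀ (t : ℕ) (e : ℕ → ℕ), (∀ i j, i ≤ j → j ≤ t + 1 → e i ≤ e j) →
    ∑ m ∈ Finset.Icc 1 t, ∑ k ∈ Finset.Ioc (e m) (e (m + 1)), f k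
      = ∑ k ∈ Finset.Ioc (e 1) (e (t + 1)), f k := by
  intro t
  induction t with
  | zero => simp
  | succ t ih =>
    intro e he
    rw [Finset.sum_Icc_succ_top (by omega : 1 ≤ t + 1),
      ih e (fun i j hij hj => he i j hij (by omega)),
      Finset.sum_Ioc_consecutive f (he 1 (t + 1) (by omega) (by omega))
        (he (t + 1) (t + 2) (by omega) (by omega))]

set_option maxHeartbeats 3200000 in
theorem stmt10
    (K N : ℕ) (hK : 2 ≤ K) (hN : 2 ≤ N)
    (h g : ℕ → ℕ → ℝ)
    (hpos : ∀ k ∈ Finset.Icc 1 K, ∀ n ∈ Finset.Icc 1 N, 0 < h k n ∧ 0 < g k n)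
    (hzero : ∀ k, h k 0 = 0 ∧ g k 0 = 0)
    (Q ζ B1 Γσ : ℝ) (hQ : 0 < Q) (hζ : 0 < ζ) (hB1 : 0 ≤ B1) (hΓσ : 0 < Γσ)
    (Pi : ℕ → ℕ) (hPiK : Pi K = 0) (hPiR : ∀ k ∈ Finset.Icc 1 K, Pi k ≤ N)
    (M : ℕ) (hM : M = (Dset K h Pi).card)
    (d : ℕ → ℕ) (hd0 : d 0 = 0) (hdK : d (M + 1) = K)
    (hdmono : ∀ i j, i < j → j ≤ M + 1 → d i < d j)
    (hdmem : ∀ i, 1 ≤ i → i ≤ M → d i ∈ Dset K h Pi)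
    (hdsurj : ∀ k ∈ Dset K h Pi, ∃ i, 1 ≤ i ∧ i ≤ M ∧ d i = k)
    (hdist : ∀ k ∈ Finset.Icc 1 K, ∀ k' ∈ Finset.Icc 1 K,
      Pi k ≠ 0 → Pi k' ≠ 0 → k ≠ k' → h k (Pi k) ≠ h k' (Pi k'))
    (hB10 : B1 = 0) (hMpos : 1 ≤ M)
    (g' : ℕ → ℕ → ℝ)
    (hg' : ∀ i, 1 ≤ i → i ≤ M → ∀ k, d i < k → k ≤ d (i + 1) → ∀ n,
      g' k n = h (d i) (Pi (d i)) * g k n) :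
    sSup {r : ℝ | ∃ (q : ℕ → ℝ) (p : ℕ → ℕ → ℝ),
        FeasibleP K N h Q ζ B1 Pi q p ∧ r = RateP K N g Γσ Pi p}
    = sSup {r : ℝ | ∃ p' : ℕ → ℕ → ℝ,
        (∀ k ∈ Finset.Icc (d 1 + 1) K, ∀ n ∈ NI N Pi k, 0 ≤ p' k n) ∧
        (∑ k ∈ Finset.Icc (d 1 + 1) K, ∑ n ∈ NI N Pi k, p' k n = ζ * (K : ℝ) * Q) ∧
        r = (1 / ((K : ℝ) * N)) * ∑ k ∈ Finset.Icc (d 1 + 1) K, ∑ n ∈ NI N Pi k,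
              Real.logb 2 (1 + g' k n * p' k n / Γσ)} := by
  classical
  subst hB10
  -- membership criterion for Dset
  have hDmem : ∀ k, k ∈ Dset K h Pi ↔ (1 ≤ k ∧ k ≤ K - 1) ∧ Pi k ≠ 0 ∧
      ∀ j, 1 ≤ j → j < k → h j (Pi j) < h k (Pi k) := by
    intro k
    simp only [Dset, Finset.mem_filter, Finset.mem_Icc]
  have hdmem' : ∀ m, 1 ≤ m → m ≤ M → (1 ≤ d m ∧ d m ≤ K - 1) ∧ Pi (d m) ≠ 0 ∧
      ∀ j, 1 ≤ j → j < d m → h j (Pi j) < h (d m) (Pi (d m)) :=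
    fun m h1 h2 => (hDmem _).mp (hdmem m h1 h2)
  have hdle : ∀ i j, i ≤ j → j ≤ M + 1 → d i ≤ d j := by
    intro i j hij hj
    rcases eq_or_lt_of_le hij with rfl | hl
    · exact le_rfl
    · exact (hdmono i j hl hj).le
  have hdmK : ∀ m, m ≤ M + 1 → d m ≤ K := fun m hm => hdK ▸ hdle m (M + 1) hm le_rfl
  have hd1pos : 1 ≤ d 1 := (hdmem' 1 le_rfl hMpos).1.1
  have hd1K : d 1 ≤ K - 1 := (hdmem' 1 le_rfl hMpos).1.2
  have hhpos : ∀ j, 1 ≤ j → j ≤ K → Pi j ≠ 0 → 0 < h j (Pi j) := by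
    intro j h1 h2 hP0
    exact (hpos j (Finset.mem_Icc.mpr ⟨h1, h2⟩) (Pi j)
      (Finset.mem_Icc.mpr ⟨Nat.one_le_iff_ne_zero.mpr hP0,
        hPiR j (Finset.mem_Icc.mpr ⟨h1, h2⟩)⟩)).1
  have hHpos : ∀ m, 1 ≤ m → m ≤ M → 0 < h (d m) (Pi (d m)) := by
    intro m h1 h2
    exact hhpos (d m) (hdmem' m h1 h2).1.1 (by have := (hdmem' m h1 h2).1.2; omega)
      (hdmem' m h1 h2).2.1
  have hh0 : ∀ j, Pi j = 0 → h j (Pi j) = 0 := fun j hj => by rw [hj]; exact (hzero j).1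
  have hhnn : ∀ j, 1 ≤ j → j ≤ K → 0 ≤ h j (Pi j) := by
    intro j h1 h2
    by_cases hP0 : Pi j = 0
    · rw [hh0 j hP0]
    · exact (hhpos j h1 h2 hP0).le
  have hNI : ∀ k n, n ∈ NI N Pi k ↔ n ≤ N ∧ n ≠ Pi k := by
    intro k n
    simp [NI, Finset.mem_sdiff, Finset.mem_Icc]
  have hgnn : ∀ k, 1 ≤ k → k ≤ K → ∀ n ∈ NI N Pi k, 0 ≤ g k n := by
    intro k h1 h2 n hn
    rcases Nat.eq_zero_or_pos n with rfl | hn1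
    · rw [(hzero k).2]
    · exact (hpos k (Finset.mem_Icc.mpr ⟨h1, h2⟩) n
        (Finset.mem_Icc.mpr ⟨hn1, ((hNI k n).mp hn).1⟩)).2.le
  -- below d 1 everything is a dummy slot
  have lemB : ∀ j, 1 ≤ j → j < d 1 → Pi j = 0 := by
    intro j
    induction j using Nat.strong_induction_on with
    | _ j ih =>
      intro h1 h2
      by_contra hP0
      have hjD : j ∈ Dset K h Pi := by
        rw [hDmem]
        refine ⟨⟨h1, by omega⟩, hP0, ?_⟩
        intro j' h1' h2'
        rw [hh0 j' (ih j' h2' h1' (by omega))]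
        exact hhpos j h1 (by omega) hP0
      obtain ⟨i, hi1, hiM, hdi⟩ := hdsurj j hjD
      have := hdle 1 i hi1 (by omega)
      omega
  have lemA : ∀ m, 1 ≤ m → m ≤ M → ∀ j, 1 ≤ j → j < d (m + 1) →
      h j (Pi j) ≤ h (d m) (Pi (d m)) := by
    intro m hm1 hmM j
    induction j using Nat.strong_induction_on with
    | _ j ih =>
      intro h1 h2
      have hjK : j ≤ K - 1 := by
        have := hdmK (m + 1) (by omega); omega
      by_cases hP0 : Pi j = 0
      · rw [hh0 j hP0]; exact (hHpos m hm1 hmM).le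
      rcases lt_trichotomy j (d m) with hlt | heq | hgt
      · exact ((hdmem' m hm1 hmM).2.2 j h1 hlt).le
      · rw [heq]
      · have hjD : j ∉ Dset K h Pi := by
          intro hjD
          obtain ⟨i, hi1, hiM, hdi⟩ := hdsurj j hjD
          rcases le_or_gt i m with hle | hlt
          · have := hdle i m hle (by omega); omega
          · have := hdle (m + 1) i hlt (by omega); omega
        rw [hDmem] at hjD
        push_neg at hjD
        obtain ⟨j', hj'1, hj'2, hj'3⟩ := hjD ⟨h1, hjK⟩ hP0
        exact le_trans hj'3 (ih j' hj'2 hj'1 (by omega))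
  -- the interval index function
  set idx : ℕ → ℕ := fun k => Nat.findGreatest (fun m => d m < k) M with hidxdef
  have hidx_le : ∀ k, idx k ≤ M := fun k => Nat.findGreatest_le M
  have hidx_spec : ∀ k, d 1 < k → k ≤ K →
      1 ≤ idx k ∧ idx k ≤ M ∧ d (idx k) < k ∧ k ≤ d (idx k + 1) := by
    intro k h1 h2
    have hge : 1 ≤ idx k := Nat.le_findGreatest hMpos h1
    have hle : idx k ≤ M := Nat.findGreatest_le M
    have hPk : d (idx k) < k := Nat.findGreatest_spec (P := fun m => d m < k) hMpos h1
    refine ⟨hge, hle, hPk, ?_⟩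
    by_cases hM' : idx k = M
    · rw [hM', hdK]; exact h2
    · have := Nat.findGreatest_is_greatest
        (lt_add_one (idx k) : idx k < idx k + 1) (by omega : idx k + 1 ≤ M)
      simpa using this
  have hidx_eq : ∀ m, 1 ≤ m → m ≤ M → ∀ k, d m < k → k ≤ d (m + 1) → idx k = m := by
    intro m hm1 hm2 k hk1 hk2
    have h1 : m ≤ idx k := Nat.le_findGreatest hm2 hk1
    have h2 : idx k ≤ M := Nat.findGreatest_le M
    by_contra hne
    have hlt : m < idx k := lt_of_le_of_ne h1 (Ne.symm hne)
    have hP : d (idx k) < k := Nat.findGreatest_spec (P := fun m => d m < k) hm2 hk1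
    have := hdle (m + 1) (idx k) hlt (by omega)
    omega
  have hHinn : ∀ k, d 1 < k → k ≤ K → 0 < h (d (idx k)) (Pi (d (idx k))) := by
    intro k h1 h2
    obtain ⟨a, b, _, _⟩ := hidx_spec k h1 h2
    exact hHpos (idx k) a b
  have hg'eq : ∀ k, d 1 < k → k ≤ K → ∀ n,
      g' k n = h (d (idx k)) (Pi (d (idx k))) * g k n := by
    intro k h1 h2 n
    obtain ⟨a, b, c, e⟩ := hidx_spec k h1 h2
    exact hg' (idx k) a b k c e n
  have hKQpos : (0:ℝ) < (K : ℝ) * Q := by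
    have : (0:ℝ) < (K : ℝ) := by exact_mod_cast (by omega : 0 < K)
    positivity
  have hd1K' : d 1 + 1 ≤ K := by omega
  have h1NI : (1 : ℕ) ∈ NI N Pi K := (hNI K 1).mpr ⟨by omega, by rw [hPiK]; omega⟩
  have hKmem : K ∈ Finset.Icc (d 1 + 1) K := Finset.mem_Icc.mpr ⟨hd1K', le_rfl⟩
  -- nonemptiness of the (P) value set
  have lhs_ne : {r : ℝ | ∃ (q : ℕ → ℝ) (p : ℕ → ℕ → ℝ),
      FeasibleP K N h Q ζ 0 Pi q p ∧ r = RateP K N g Γσ Pi p}.Nonempty := by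
    refine ⟨RateP K N g Γσ Pi (fun _ _ => 0), fun _ => 0, fun _ _ => 0, ?_, rfl⟩
    refine ⟨fun _ _ => le_rfl, fun _ _ _ => rfl, fun _ _ _ _ => le_rfl, ?_, ?_⟩
    · simpa using hKQpos.le
    · intro i _
      simp
  -- nonemptiness of the water-filling value set
  have rhs_ne : {r : ℝ | ∃ p' : ℕ → ℕ → ℝ,
      (∀ k ∈ Finset.Icc (d 1 + 1) K, ∀ n ∈ NI N Pi k, 0 ≤ p' k n) ∧
      (∑ k ∈ Finset.Icc (d 1 + 1) K, ∑ n ∈ NI N Pi k, p' k n = ζ * (K : ℝ) * Q) ∧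
      r = (1 / ((K : ℝ) * N)) * ∑ k ∈ Finset.Icc (d 1 + 1) K, ∑ n ∈ NI N Pi k,
            Real.logb 2 (1 + g' k n * p' k n / Γσ)}.Nonempty := by
    refine ⟨_, fun k n => if k = K ∧ n = 1 then ζ * (K : ℝ) * Q else 0, ?_, ?_, rfl⟩
    · intro k _ n _
      dsimp only
      split
      · positivity
      · exact le_rfl
    · rw [Finset.sum_eq_single_of_mem K hKmem]
      · rw [Finset.sum_eq_single_of_mem 1 h1NI]
        · simp
        · intro n _ hn
          simp [hn]
      · intro b _ hb
        exact Finset.sum_eq_zero (fun n _ => by simp [hb])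
  -- upper bound for the water-filling set
  have rhs_bdd : BddAbove {r : ℝ | ∃ p' : ℕ → ℕ → ℝ,
      (∀ k ∈ Finset.Icc (d 1 + 1) K, ∀ n ∈ NI N Pi k, 0 ≤ p' k n) ∧
      (∑ k ∈ Finset.Icc (d 1 + 1) K, ∑ n ∈ NI N Pi k, p' k n = ζ * (K : ℝ) * Q) ∧
      r = (1 / ((K : ℝ) * N)) * ∑ k ∈ Finset.Icc (d 1 + 1) K, ∑ n ∈ NI N Pi k,
            Real.logb 2 (1 + g' k n * p' k n / Γσ)} := by
    refine ⟨(1 / ((K : ℝ) * N)) * ∑ k ∈ Finset.Icc (d 1 + 1) K, ∑ n ∈ NI N Pi k,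
      Real.logb 2 (1 + g' k n * (ζ * (K : ℝ) * Q) / Γσ), ?_⟩
    rintro r ⟨p', hnn, hsum, rfl⟩
    have hg'nn : ∀ k ∈ Finset.Icc (d 1 + 1) K, ∀ n ∈ NI N Pi k, 0 ≤ g' k n := by
      intro k hk n hn
      rw [Finset.mem_Icc] at hk
      rw [hg'eq k (by omega) hk.2]
      exact mul_nonneg (hHinn k (by omega) hk.2).le (hgnn k (by omega) hk.2 n hn)
    refine mul_le_mul_of_nonneg_left (Finset.sum_le_sum ?_) (by positivity)
    intro k hk
    refine Finset.sum_le_sum ?_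
    intro n hn
    have hple : p' k n ≤ ζ * (K : ℝ) * Q := by
      rw [← hsum]
      calc p' k n ≤ ∑ n' ∈ NI N Pi k, p' k n' :=
            Finset.single_le_sum (fun i hi => hnn k hk i hi) hn
        _ ≤ _ := Finset.single_le_sum
            (f := fun k => ∑ n' ∈ NI N Pi k, p' k n')
            (fun i hi => Finset.sum_nonneg (fun j hj => hnn i hi j hj)) hk
    have h0 : (0:ℝ) < 1 + g' k n * p' k n / Γσ := by
      have := mul_nonneg (hg'nn k hk n hn) (hnn k hk n hn)
      positivity
    refine Real.logb_le_logb_of_le one_lt_two h0 ?_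
    have := hg'nn k hk n hn
    gcongr
  have hIoc1 : Finset.Icc (d 1 + 1) K = Finset.Ioc (d 1) K := by
    ext y; simp only [Finset.mem_Icc, Finset.mem_Ioc]; omega
  -- forward direction: every (P) value is at most the WF supremum
  have forward : ∀ r ∈ {r : ℝ | ∃ (q : ℕ → ℝ) (p : ℕ → ℕ → ℝ),
      FeasibleP K N h Q ζ 0 Pi q p ∧ r = RateP K N g Γσ Pi p},
      r ≤ sSup {r : ℝ | ∃ p' : ℕ → ℕ → ℝ,
        (∀ k ∈ Finset.Icc (d 1 + 1) K, ∀ n ∈ NI N Pi k, 0 ≤ p' k n) ∧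
        (∑ k ∈ Finset.Icc (d 1 + 1) K, ∑ n ∈ NI N Pi k, p' k n = ζ * (K : ℝ) * Q) ∧
        r = (1 / ((K : ℝ) * N)) * ∑ k ∈ Finset.Icc (d 1 + 1) K, ∑ n ∈ NI N Pi k,
              Real.logb 2 (1 + g' k n * p' k n / Γσ)} := by
    rintro r ⟨q, p, hfeas, rfl⟩
    obtain ⟨hq0, hqPi, hp0, hqs, hpre⟩ := hfeas
    -- power is zero before slot d 1
    have hpz : ∀ k ∈ Finset.Icc 1 (d 1), ∀ n ∈ NI N Pi k, p k n = 0 := by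
      have hle0 : ∑ k ∈ Finset.Icc 1 (d 1), ∑ n ∈ NI N Pi k, p k n ≤ 0 := by
        have := hpre (d 1) (Finset.mem_Icc.mpr ⟨hd1pos, by omega⟩)
        have hz : ∑ k ∈ Finset.Icc 1 (d 1 - 1), h k (Pi k) * q k = 0 := by
          refine Finset.sum_eq_zero ?_
          intro j hj
          rw [Finset.mem_Icc] at hj
          rw [hh0 j (lemB j hj.1 (by omega)), zero_mul]
        rw [hz] at this
        simpa using this
      have heq : ∑ k ∈ Finset.Icc 1 (d 1), ∑ n ∈ NI N Pi k, p k n = 0 := by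
        refine le_antisymm hle0 (Finset.sum_nonneg ?_)
        intro k hk
        rw [Finset.mem_Icc] at hk
        exact Finset.sum_nonneg (fun n hn =>
          hp0 k (Finset.mem_Icc.mpr ⟨hk.1, by omega⟩) n hn)
      rw [Finset.sum_eq_zero_iff_of_nonneg (fun k hk => Finset.sum_nonneg (fun n hn =>
        hp0 k (Finset.mem_Icc.mpr ⟨(Finset.mem_Icc.mp hk).1,
          by have := (Finset.mem_Icc.mp hk).2; omega⟩) n hn))] at heq
      intro k hk n hn
      have := heq k hk
      rw [Finset.sum_eq_zero_iff_of_nonneg (fun n hn =>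
        hp0 k (Finset.mem_Icc.mpr ⟨(Finset.mem_Icc.mp hk).1,
          by have := (Finset.mem_Icc.mp hk).2; omega⟩) n hn)] at this
      exact this n hn
    have hC0 : ∑ k ∈ Finset.Icc 1 (d 1), ∑ n ∈ NI N Pi k, p k n = 0 :=
      Finset.sum_eq_zero (fun k hk => Finset.sum_eq_zero (fun n hn => hpz k hk n hn))
    have hAC : ∀ m, 1 ≤ m → m ≤ M →
        ∑ k ∈ Finset.Icc 1 (d (m + 1)), ∑ n ∈ NI N Pi k, p k n ≤
          ζ * ∑ j ∈ Finset.Icc 1 (d (m + 1) - 1), h j (Pi j) * q j := by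
      intro m h1 h2
      have hmem : d (m + 1) ∈ Finset.Icc 1 K := by
        have := hdle 1 (m + 1) (by omega) (by omega)
        exact Finset.mem_Icc.mpr ⟨by omega, hdmK (m + 1) (by omega)⟩
      have := hpre (d (m + 1)) hmem
      simpa using this
    have hTeq : ∀ m, 1 ≤ m → m ≤ M →
        ∑ k ∈ Finset.Ioc (d m) (d (m + 1)),
          (∑ n ∈ NI N Pi k, p k n) / h (d (idx k)) (Pi (d (idx k)))
        = (∑ k ∈ Finset.Ioc (d m) (d (m + 1)), ∑ n ∈ NI N Pi k, p k n)
            / h (d m) (Pi (d m)) := by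
      intro m h1 h2
      rw [Finset.sum_div]
      refine Finset.sum_congr rfl ?_
      intro k hk
      rw [Finset.mem_Ioc] at hk
      rw [hidx_eq m h1 h2 k hk.1 hk.2]
    have hhq : ∀ m, 1 ≤ m → m ≤ M → ∀ X : Finset ℕ,
        (∀ j ∈ X, 1 ≤ j ∧ j < d (m + 1) ∧ j ≤ K) →
        ∑ j ∈ X, h j (Pi j) * q j ≤ h (d m) (Pi (d m)) * ∑ j ∈ X, q j := by
      intro m h1 h2 X hX
      rw [Finset.mul_sum]
      refine Finset.sum_le_sum ?_
      intro j hj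
      obtain ⟨ha, hb, hc⟩ := hX j hj
      exact mul_le_mul_of_nonneg_right (lemA m h1 h2 j ha hb)
        (hq0 j (Finset.mem_Icc.mpr ⟨ha, hc⟩))
    -- main inductive claim
    have claim : ∀ m, 1 ≤ m → m ≤ M →
        (∑ k ∈ Finset.Ioc (d 1) (d (m + 1)),
          (∑ n ∈ NI N Pi k, p k n) / h (d (idx k)) (Pi (d (idx k))))
        + (ζ * (∑ j ∈ Finset.Icc 1 (d (m + 1) - 1), h j (Pi j) * q j)
            - ∑ k ∈ Finset.Icc 1 (d (m + 1)), ∑ n ∈ NI N Pi k, p k n)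
            / h (d m) (Pi (d m))
        ≤ ζ * ∑ j ∈ Finset.Icc 1 (d (m + 1) - 1), q j := by
      intro m hm
      induction m, hm using Nat.le_induction with
      | base =>
        intro _
        rw [hTeq 1 le_rfl hMpos]
        have hCs : ∑ k ∈ Finset.Icc 1 (d (1 + 1)), ∑ n ∈ NI N Pi k, p k n
            = ∑ k ∈ Finset.Ioc (d 1) (d (1 + 1)), ∑ n ∈ NI N Pi k, p k n := by
          rw [sum_split (d 1) (d (1 + 1)) (hdle 1 (1 + 1) (by omega) (by omega)), hC0,
            zero_add]
        rw [hCs, ← add_div]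
        have hnum : (∑ k ∈ Finset.Ioc (d 1) (d (1 + 1)), ∑ n ∈ NI N Pi k, p k n)
            + (ζ * (∑ j ∈ Finset.Icc 1 (d (1 + 1) - 1), h j (Pi j) * q j)
              - ∑ k ∈ Finset.Ioc (d 1) (d (1 + 1)), ∑ n ∈ NI N Pi k, p k n)
            = ζ * (∑ j ∈ Finset.Icc 1 (d (1 + 1) - 1), h j (Pi j) * q j) := by ring
        rw [hnum, div_le_iff₀ (hHpos 1 le_rfl hMpos)]
        have hb := hhq 1 le_rfl hMpos (Finset.Icc 1 (d (1 + 1) - 1)) ?side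
        case side =>
          intro j hj
          rw [Finset.mem_Icc] at hj
          have h2K := hdmK (1 + 1) (by omega)
          have h21 : 1 ≤ d (1 + 1) := le_trans hd1pos (hdle 1 (1 + 1) (by omega) (by omega))
          exact ⟨hj.1, by omega, by omega⟩
        have := mul_le_mul_of_nonneg_left hb hζ.le
        linarith
      | succ m hm1 ih =>
        intro hm2
        have ih' := ih (by omega)
        have hd12 : d 1 ≤ d (m + 1) := hdle 1 (m + 1) (by omega) (by omega)
        have hdD : d (m + 1) ≤ d (m + 1 + 1) := hdle (m + 1) (m + 1 + 1) (by omega) (by omega)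
        have hHm : 0 < h (d m) (Pi (d m)) := hHpos m hm1 (by omega)
        have hHm1 : 0 < h (d (m + 1)) (Pi (d (m + 1))) := hHpos (m + 1) (by omega) hm2
        have hHlt : h (d m) (Pi (d m)) < h (d (m + 1)) (Pi (d (m + 1))) :=
          (hdmem' (m + 1) (by omega) hm2).2.2 (d m) (hdmem' m hm1 (by omega)).1.1
            (hdmono m (m + 1) (lt_add_one m) (by omega))
        rw [← Finset.sum_Ioc_consecutive _ hd12 hdD, hTeq (m + 1) (by omega) hm2,
          sum_split (d (m + 1)) (d (m + 1 + 1)) hdD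
            (fun k => ∑ n ∈ NI N Pi k, p k n),
          sum_split (d (m + 1) - 1) (d (m + 1 + 1) - 1) (by omega)
            (fun j => h j (Pi j) * q j),
          sum_split (d (m + 1) - 1) (d (m + 1 + 1) - 1) (by omega) q]
        have hACm : ∑ k ∈ Finset.Icc 1 (d (m + 1)), ∑ n ∈ NI N Pi k, p k n ≤
            ζ * ∑ j ∈ Finset.Icc 1 (d (m + 1) - 1), h j (Pi j) * q j :=
          hAC m hm1 (by omega)
        have hΔ := hhq (m + 1) (by omega) hm2
          (Finset.Ioc (d (m + 1) - 1) (d (m + 1 + 1) - 1)) ?sideΔ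
        case sideΔ =>
          intro j hj
          rw [Finset.mem_Ioc] at hj
          have h1 : 1 ≤ d (m + 1) := le_trans hd1pos hd12
          have h2K := hdmK (m + 1 + 1) (by omega)
          have h21 : 1 ≤ d (m + 1 + 1) := le_trans h1 hdD
          exact ⟨by omega, by omega, by omega⟩
        set T := ∑ k ∈ Finset.Ioc (d 1) (d (m + 1)),
          (∑ n ∈ NI N Pi k, p k n) / h (d (idx k)) (Pi (d (idx k))) with hT
        set X := ∑ k ∈ Finset.Ioc (d (m + 1)) (d (m + 1 + 1)), ∑ n ∈ NI N Pi k, p k n with hX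
        set A := ∑ j ∈ Finset.Icc 1 (d (m + 1) - 1), h j (Pi j) * q j with hA
        set C := ∑ k ∈ Finset.Icc 1 (d (m + 1)), ∑ n ∈ NI N Pi k, p k n with hC
        set DA := ∑ j ∈ Finset.Ioc (d (m + 1) - 1) (d (m + 1 + 1) - 1), h j (Pi j) * q j
          with hDA
        set Y := ∑ j ∈ Finset.Icc 1 (d (m + 1) - 1), q j with hY
        set DY := ∑ j ∈ Finset.Ioc (d (m + 1) - 1) (d (m + 1 + 1) - 1), q j with hDY
        set H2 := h (d (m + 1)) (Pi (d (m + 1))) with hH2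
        set H1 := h (d m) (Pi (d m)) with hH1
        -- goal : T + X / H2 + (ζ * (A + DA) - (C + X)) / H2 ≤ ζ * (Y + DY)
        have e1 : X / H2 + (ζ * (A + DA) - (C + X)) / H2
            = (ζ * A - C) / H2 + ζ * DA / H2 := by
          rw [← add_div, ← add_div]
          congr 1
          ring
        have e2 : (ζ * A - C) / H2 ≤ (ζ * A - C) / H1 := by
          rw [div_le_div_iff₀ hHm1 hHm]
          nlinarith [sub_nonneg.mpr hACm]
        have e3 : ζ * DA / H2 ≤ ζ * DY := by
          rw [div_le_iff₀ hHm1]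
          nlinarith [hζ.le]
        linarith [ih', e1, e2, e3]
    -- the key bound
    have key : ∑ k ∈ Finset.Icc (d 1 + 1) K, ∑ n ∈ NI N Pi k,
        p k n / h (d (idx k)) (Pi (d (idx k))) ≤ ζ * (K : ℝ) * Q := by
      have hcM := claim M hMpos le_rfl
      rw [hdK] at hcM
      have hsec : 0 ≤ (ζ * (∑ j ∈ Finset.Icc 1 (K - 1), h j (Pi j) * q j)
          - ∑ k ∈ Finset.Icc 1 K, ∑ n ∈ NI N Pi k, p k n) / h (d M) (Pi (d M)) := by
        have := hAC M hMpos le_rfl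
        rw [hdK] at this
        exact div_nonneg (by linarith) (hHpos M hMpos le_rfl).le
      have hqle : ∑ j ∈ Finset.Icc 1 (K - 1), q j ≤ (K : ℝ) * Q := by
        refine le_trans (Finset.sum_le_sum_of_subset_of_nonneg
          (Finset.Icc_subset_Icc_right (by omega)) ?_) hqs
        intro j hj _
        exact hq0 j hj
      have hLHS : ∑ k ∈ Finset.Icc (d 1 + 1) K, ∑ n ∈ NI N Pi k,
          p k n / h (d (idx k)) (Pi (d (idx k)))
          = ∑ k ∈ Finset.Ioc (d 1) K,
            (∑ n ∈ NI N Pi k, p k n) / h (d (idx k)) (Pi (d (idx k))) := by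
        rw [hIoc1]
        exact Finset.sum_congr rfl (fun k _ => (Finset.sum_div _ _ _).symm)
      rw [hLHS]
      nlinarith [hζ.le]
    -- construct the feasible water-filling point
    set T := ∑ k ∈ Finset.Icc (d 1 + 1) K, ∑ n ∈ NI N Pi k,
      p k n / h (d (idx k)) (Pi (d (idx k))) with hTdef
    have hslack : 0 ≤ ζ * (K : ℝ) * Q - T := sub_nonneg.mpr key
    set p' : ℕ → ℕ → ℝ := fun k n =>
      (if k = K ∧ n = 1 then ζ * (K : ℝ) * Q - T else 0)
        + p k n / h (d (idx k)) (Pi (d (idx k))) with hp'def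
    have hp'nn : ∀ k ∈ Finset.Icc (d 1 + 1) K, ∀ n ∈ NI N Pi k, 0 ≤ p' k n := by
      intro k hk n hn
      rw [Finset.mem_Icc] at hk
      refine add_nonneg ?_ (div_nonneg
        (hp0 k (Finset.mem_Icc.mpr ⟨by omega, hk.2⟩) n hn)
        (hHinn k (by omega) hk.2).le)
      split
      · exact hslack
      · exact le_rfl
    have hif : ∑ k ∈ Finset.Icc (d 1 + 1) K, ∑ n ∈ NI N Pi k,
        (if k = K ∧ n = 1 then ζ * (K : ℝ) * Q - T else 0) = ζ * (K : ℝ) * Q - T := by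
      rw [Finset.sum_eq_single_of_mem K hKmem]
      · rw [Finset.sum_eq_single_of_mem 1 h1NI]
        · simp
        · intro n _ hn
          simp [hn]
      · intro b _ hb
        exact Finset.sum_eq_zero (fun n _ => by simp [hb])
    have hp'sum : ∑ k ∈ Finset.Icc (d 1 + 1) K, ∑ n ∈ NI N Pi k, p' k n
        = ζ * (K : ℝ) * Q := by
      calc ∑ k ∈ Finset.Icc (d 1 + 1) K, ∑ n ∈ NI N Pi k, p' k n
          = (∑ k ∈ Finset.Icc (d 1 + 1) K, ∑ n ∈ NI N Pi k,
              (if k = K ∧ n = 1 then ζ * (K : ℝ) * Q - T else 0))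
            + ∑ k ∈ Finset.Icc (d 1 + 1) K, ∑ n ∈ NI N Pi k,
                p k n / h (d (idx k)) (Pi (d (idx k))) := by
            rw [← Finset.sum_add_distrib]
            refine Finset.sum_congr rfl fun k _ => ?_
            rw [← Finset.sum_add_distrib]
        _ = (ζ * (K : ℝ) * Q - T) + T := by rw [hif, ← hTdef]
        _ = ζ * (K : ℝ) * Q := sub_add_cancel _ _
    have hrate : RateP K N g Γσ Pi p ≤ (1 / ((K : ℝ) * N)) *
        ∑ k ∈ Finset.Icc (d 1 + 1) K, ∑ n ∈ NI N Pi k,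
          Real.logb 2 (1 + g' k n * p' k n / Γσ) := by
      simp only [RateP]
      refine mul_le_mul_of_nonneg_left ?_ (by positivity)
      rw [sum_split (d 1) K (by omega)
        (fun k => ∑ n ∈ NI N Pi k, Real.logb 2 (1 + g k n * p k n / Γσ))]
      have hz : ∑ k ∈ Finset.Icc 1 (d 1), ∑ n ∈ NI N Pi k,
          Real.logb 2 (1 + g k n * p k n / Γσ) = 0 := by
        refine Finset.sum_eq_zero fun k hk => Finset.sum_eq_zero fun n hn => ?_
        rw [hpz k hk n hn]
        simp
      rw [hz, zero_add, ← hIoc1]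
      refine Finset.sum_le_sum fun k hk => Finset.sum_le_sum fun n hn => ?_
      rw [Finset.mem_Icc] at hk
      have hgk : 0 ≤ g k n := hgnn k (by omega) hk.2 n hn
      have hpk : 0 ≤ p k n := hp0 k (Finset.mem_Icc.mpr ⟨by omega, hk.2⟩) n hn
      have hH : 0 < h (d (idx k)) (Pi (d (idx k))) := hHinn k (by omega) hk.2
      have harg : g k n * p k n ≤ g' k n * p' k n := by
        rw [hg'eq k (by omega) hk.2 n, hp'def]
        dsimp only
        rw [mul_add]
        have h2 : h (d (idx k)) (Pi (d (idx k))) * g k n *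
            (p k n / h (d (idx k)) (Pi (d (idx k)))) = g k n * p k n := by
          field_simp
        rw [h2]
        have h3 : 0 ≤ h (d (idx k)) (Pi (d (idx k))) * g k n *
            (if k = K ∧ n = 1 then ζ * (K : ℝ) * Q - T else 0) := by
          refine mul_nonneg (mul_nonneg hH.le hgk) ?_
          split
          · exact hslack
          · exact le_rfl
        linarith
      have h0 : (0:ℝ) < 1 + g k n * p k n / Γσ := by positivity
      refine Real.logb_le_logb_of_le one_lt_two h0 ?_
      exact add_le_add_right ((div_le_div_iff_of_pos_right hΓσ).mpr harg) 1
    exact le_trans hrate (le_csSup rhs_bdd ⟨p', hp'nn, hp'sum, rfl⟩)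
  -- backward direction: every WF value is attained in (P)
  have backward : {r : ℝ | ∃ p' : ℕ → ℕ → ℝ,
      (∀ k ∈ Finset.Icc (d 1 + 1) K, ∀ n ∈ NI N Pi k, 0 ≤ p' k n) ∧
      (∑ k ∈ Finset.Icc (d 1 + 1) K, ∑ n ∈ NI N Pi k, p' k n = ζ * (K : ℝ) * Q) ∧
      r = (1 / ((K : ℝ) * N)) * ∑ k ∈ Finset.Icc (d 1 + 1) K, ∑ n ∈ NI N Pi k,
            Real.logb 2 (1 + g' k n * p' k n / Γσ)}
      ⊆ {r : ℝ | ∃ (q : ℕ → ℝ) (p : ℕ → ℕ → ℝ),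
        FeasibleP K N h Q ζ 0 Pi q p ∧ r = RateP K N g Γσ Pi p} := by
    rintro r ⟨p', hnn, hsum, rfl⟩
    have hmem' : ∀ m, 1 ≤ m → m ≤ M → ∀ k ∈ Finset.Ioc (d m) (d (m + 1)),
        k ∈ Finset.Icc (d 1 + 1) K := by
      intro m h1 h2 k hk
      rw [Finset.mem_Ioc] at hk
      have := hdle 1 m h1 (by omega)
      have := hdmK (m + 1) (by omega)
      exact Finset.mem_Icc.mpr ⟨by omega, by omega⟩
    have hEnn : ∀ m, 1 ≤ m → m ≤ M →
        0 ≤ ∑ k ∈ Finset.Ioc (d m) (d (m + 1)), ∑ n ∈ NI N Pi k, p' k n := by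
      intro m h1 h2
      exact Finset.sum_nonneg (fun k hk => Finset.sum_nonneg
        (fun n hn => hnn k (hmem' m h1 h2 k hk) n hn))
    have hdinj : ∀ m m', 1 ≤ m → m ≤ M → 1 ≤ m' → m' ≤ M → d m = d m' → m = m' := by
      intro m m' _ h2 _ h2' heq
      by_contra hne
      rcases lt_or_gt_of_ne hne with hlt | hgt
      · have := hdmono m m' hlt (by omega); omega
      · have := hdmono m' m hgt (by omega); omega
    set q0 : ℕ → ℝ := fun j => (1 / ζ) * ∑ m ∈ Finset.Icc 1 M,
      (if d m = j then ∑ k ∈ Finset.Ioc (d m) (d (m + 1)), ∑ n ∈ NI N Pi k, p' k n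
        else 0) with hq0def
    set p0 : ℕ → ℕ → ℝ := fun k n =>
      if d 1 < k then h (d (idx k)) (Pi (d (idx k))) * p' k n else 0 with hp0def
    have hq0nn : ∀ j, 0 ≤ q0 j := by
      intro j
      rw [hq0def]
      refine mul_nonneg (by positivity) (Finset.sum_nonneg ?_)
      intro m hm
      rw [Finset.mem_Icc] at hm
      split
      · exact hEnn m hm.1 hm.2
      · exact le_rfl
    have hqd : ∀ m, 1 ≤ m → m ≤ M → q0 (d m)
        = (∑ k ∈ Finset.Ioc (d m) (d (m + 1)), ∑ n ∈ NI N Pi k, p' k n) / ζ := by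
      intro m h1 h2
      rw [hq0def]
      dsimp only
      rw [Finset.sum_eq_single m]
      · rw [if_pos rfl, one_div_mul_eq_div]
      · intro b hb hbm
        rw [Finset.mem_Icc] at hb
        rw [if_neg (fun hc => hbm (hdinj b m hb.1 hb.2 h1 h2 hc))]
      · intro hm
        exact absurd (Finset.mem_Icc.mpr ⟨h1, h2⟩) hm
    have hq0Pi : ∀ j, Pi j = 0 → q0 j = 0 := by
      intro j hj
      rw [hq0def]
      dsimp only
      rw [Finset.sum_eq_zero, mul_zero]
      intro m hm
      rw [Finset.mem_Icc] at hm
      rw [if_neg]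
      intro hc
      exact (hdmem' m hm.1 hm.2).2.1 (by rw [hc, hj])
    have hEtot : ∑ m ∈ Finset.Icc 1 M,
        ∑ k ∈ Finset.Ioc (d m) (d (m + 1)), ∑ n ∈ NI N Pi k, p' k n
        = ζ * (K : ℝ) * Q := by
      rw [sum_parts (fun k => ∑ n ∈ NI N Pi k, p' k n) M d hdle, hdK, ← hIoc1, hsum]
    have hq0sum : ∑ j ∈ Finset.Icc 1 K, q0 j = (K : ℝ) * Q := by
      rw [hq0def]
      dsimp only
      rw [← Finset.mul_sum, Finset.sum_comm]
      have : ∀ m ∈ Finset.Icc 1 M, (∑ j ∈ Finset.Icc 1 K,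
          if d m = j then ∑ k ∈ Finset.Ioc (d m) (d (m + 1)), ∑ n ∈ NI N Pi k, p' k n
          else 0)
          = ∑ k ∈ Finset.Ioc (d m) (d (m + 1)), ∑ n ∈ NI N Pi k, p' k n := by
        intro m hm
        rw [Finset.mem_Icc] at hm
        rw [Finset.sum_ite_eq, if_pos]
        exact Finset.mem_Icc.mpr ⟨(hdmem' m hm.1 hm.2).1.1, hdmK m (by omega)⟩
      rw [Finset.sum_congr rfl this, hEtot]
      field_simp
    refine ⟨q0, p0, ⟨fun k _ => hq0nn k, fun k _ hk => hq0Pi k hk, ?_, ?_, ?_⟩, ?_⟩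
    · -- p0 nonneg
      intro k hk n hn
      rw [Finset.mem_Icc] at hk
      rw [hp0def]
      dsimp only
      split
      · rename_i hdk
        exact mul_nonneg (hHinn k hdk hk.2).le
          (hnn k (Finset.mem_Icc.mpr ⟨by omega, hk.2⟩) n hn)
      · exact le_rfl
    · -- total q
      rw [hq0sum]
    · -- causality constraints
      intro i hi
      rw [Finset.mem_Icc] at hi
      have hRHSnn : 0 ≤ ζ * ∑ j ∈ Finset.Icc 1 (i - 1), h j (Pi j) * q0 j := by
        refine mul_nonneg hζ.le (Finset.sum_nonneg ?_)
        intro j hj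
        rw [Finset.mem_Icc] at hj
        exact mul_nonneg (hhnn j hj.1 (by omega)) (hq0nn j)
      have hp0z : ∀ k, k ≤ d 1 → ∀ n, p0 k n = 0 := by
        intro k hkd n
        rw [hp0def]
        dsimp only
        rw [if_neg (by omega)]
      by_cases hid : i ≤ d 1
      · have : ∑ k ∈ Finset.Icc 1 i, ∑ n ∈ NI N Pi k, p0 k n = 0 :=
          Finset.sum_eq_zero (fun k hk => Finset.sum_eq_zero (fun n _ =>
            hp0z k (by rw [Finset.mem_Icc] at hk; omega) n))
        rw [this]
        linarith
      push_neg at hid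
      obtain ⟨ht1, ht2, ht3, ht4⟩ := hidx_spec i hid hi.2
      have hstep1 : ∑ k ∈ Finset.Icc 1 i, ∑ n ∈ NI N Pi k, p0 k n
          = ∑ k ∈ Finset.Ioc (d 1) i,
              h (d (idx k)) (Pi (d (idx k))) * ∑ n ∈ NI N Pi k, p' k n := by
        rw [sum_split (d 1) i hid.le (fun k => ∑ n ∈ NI N Pi k, p0 k n)]
        have hz : ∑ k ∈ Finset.Icc 1 (d 1), ∑ n ∈ NI N Pi k, p0 k n = 0 :=
          Finset.sum_eq_zero (fun k hk => Finset.sum_eq_zero (fun n _ =>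
            hp0z k (by rw [Finset.mem_Icc] at hk; omega) n))
        rw [hz, zero_add]
        refine Finset.sum_congr rfl (fun k hk => ?_)
        rw [Finset.mem_Ioc] at hk
        rw [Finset.mul_sum]
        refine Finset.sum_congr rfl (fun n _ => ?_)
        rw [hp0def]
        dsimp only
        rw [if_pos hk.1]
      have hstep2 : ∑ k ∈ Finset.Ioc (d 1) i,
            h (d (idx k)) (Pi (d (idx k))) * ∑ n ∈ NI N Pi k, p' k n
          ≤ ∑ k ∈ Finset.Ioc (d 1) (d (idx i + 1)),
            h (d (idx k)) (Pi (d (idx k))) * ∑ n ∈ NI N Pi k, p' k n := by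
        refine Finset.sum_le_sum_of_subset_of_nonneg
          (Finset.Ioc_subset_Ioc_right ht4) ?_
        intro k hk _
        rw [Finset.mem_Ioc] at hk
        have hkK : k ≤ K := le_trans hk.2 (hdmK (idx i + 1) (by omega))
        exact mul_nonneg (hHinn k hk.1 hkK).le (Finset.sum_nonneg (fun n hn =>
          hnn k (Finset.mem_Icc.mpr ⟨by omega, hkK⟩) n hn))
      have hstep3 : ∑ k ∈ Finset.Ioc (d 1) (d (idx i + 1)),
            h (d (idx k)) (Pi (d (idx k))) * ∑ n ∈ NI N Pi k, p' k n
          = ∑ m ∈ Finset.Icc 1 (idx i), h (d m) (Pi (d m)) *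
              ∑ k ∈ Finset.Ioc (d m) (d (m + 1)), ∑ n ∈ NI N Pi k, p' k n := by
        rw [← sum_parts
          (fun k => h (d (idx k)) (Pi (d (idx k))) * ∑ n ∈ NI N Pi k, p' k n)
          (idx i) d (fun a b hab hb => hdle a b hab (by omega))]
        refine Finset.sum_congr rfl (fun m hm => ?_)
        rw [Finset.mem_Icc] at hm
        rw [Finset.mul_sum]
        refine Finset.sum_congr rfl (fun k hk => ?_)
        rw [Finset.mem_Ioc] at hk
        rw [hidx_eq m hm.1 (by omega) k hk.1 hk.2]
      have hstep4 : ∑ m ∈ Finset.Icc 1 (idx i), h (d m) (Pi (d m)) *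
            ∑ k ∈ Finset.Ioc (d m) (d (m + 1)), ∑ n ∈ NI N Pi k, p' k n
          = ζ * ∑ m ∈ Finset.Icc 1 (idx i), h (d m) (Pi (d m)) * q0 (d m) := by
        rw [Finset.mul_sum]
        refine Finset.sum_congr rfl (fun m hm => ?_)
        rw [Finset.mem_Icc] at hm
        rw [hqd m hm.1 (by omega)]
        field_simp
      have hstep5 : ∑ m ∈ Finset.Icc 1 (idx i), h (d m) (Pi (d m)) * q0 (d m)
          ≤ ∑ j ∈ Finset.Icc 1 (i - 1), h j (Pi j) * q0 j := by
        rw [show ∑ m ∈ Finset.Icc 1 (idx i), h (d m) (Pi (d m)) * q0 (d m)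
            = ∑ j ∈ (Finset.Icc 1 (idx i)).image d, h j (Pi j) * q0 j from
          (Finset.sum_image (f := fun j => h j (Pi j) * q0 j) (g := d)
            (s := Finset.Icc 1 (idx i)) (fun x hx y hy hxy => by
            rw [Finset.mem_coe, Finset.mem_Icc] at hx hy
            exact hdinj x y hx.1 (le_trans hx.2 ht2) hy.1 (le_trans hy.2 ht2) hxy)).symm]
        refine Finset.sum_le_sum_of_subset_of_nonneg ?_ ?_
        · intro j hj
          rw [Finset.mem_image] at hj
          obtain ⟨m, hm, rfl⟩ := hj
          rw [Finset.mem_Icc] at hm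
          have h1m : 1 ≤ d m := (hdmem' m hm.1 (by omega)).1.1
          have : d m ≤ d (idx i) := hdle m (idx i) hm.2 (by omega)
          exact Finset.mem_Icc.mpr ⟨h1m, by omega⟩
        · intro j hj _
          rw [Finset.mem_Icc] at hj
          exact mul_nonneg (hhnn j hj.1 (by omega)) (hq0nn j)
      have := mul_le_mul_of_nonneg_left hstep5 hζ.le
      simp only [add_zero]
      linarith
    · -- the rates coincide
      simp only [RateP]
      congr 1
      rw [sum_split (d 1) K (by omega)
        (fun k => ∑ n ∈ NI N Pi k, Real.logb 2 (1 + g k n * p0 k n / Γσ))]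
      have hz : ∑ k ∈ Finset.Icc 1 (d 1), ∑ n ∈ NI N Pi k,
          Real.logb 2 (1 + g k n * p0 k n / Γσ) = 0 := by
        refine Finset.sum_eq_zero (fun k hk => Finset.sum_eq_zero (fun n _ => ?_))
        rw [Finset.mem_Icc] at hk
        rw [hp0def]
        dsimp only
        rw [if_neg (by omega)]
        simp
      rw [hz, zero_add, ← hIoc1]
      refine (Finset.sum_congr rfl (fun k hk => Finset.sum_congr rfl (fun n hn => ?_))).symm
      rw [Finset.mem_Icc] at hk
      congr 1
      rw [hp0def]
      dsimp only
      rw [if_pos (by omega : d 1 < k), hg'eq k (by omega) hk.2 n]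
      ring
  exact le_antisymm (csSup_le lhs_ne forward)
    (csSup_le_csSup ⟨_, forward⟩ rhs_ne backward)
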